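/- Let n, k be integers with 1 ≤ k < n and p = k/n. Define t₀ = 1/(12n + 1) − (1/(12k) + 1/(12(n−k))) and t₁ = 1/(12n) − (1/(12k + 1) + 1/(12(n−k) + 1)). Then exp(t₀)/√(2πk(1−p)) < P(Bin(n,p) = k) < exp(t₁)/√(2πk(1−p)), where P(Bin(n,p) = k) = C(n,k)·p^k·(1−p)^{n−k}. -/

import Mathlib

open Real

section RobbinsAux
open Real Stirling Filter Nat Topology

lemma geo_eval (n : ℝ) (hn : 1 ≤ n) :
    (1/3) * ((1/(2*n+1))^2 / (1 - (1/(2*n+1))^2)) = 1/(12*n) - 1/(12*n+12) := by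
  have h1 : (0:ℝ) < 2*n+1 := by linarith
  have h2 : (1:ℝ) - (1/(2*n+1))^2 ≠ 0 := by
    have : (1/(2*n+1))^2 < 1 := by
      rw [div_pow, one_pow, div_lt_one (by positivity)]; nlinarith
    linarith
  have h3 : (n*12 + n^2*12) ≠ 0 := by nlinarith
  field_simp
  rw [div_eq_iff (by nlinarith : ((2*n+1)^2-1) ≠ 0)]
  ring

lemma diff_lt_upper (m : ℕ) :
    Real.log (stirlingSeq (m+1)) - Real.log (stirlingSeq (m+2)) <
      1/(12*((m:ℝ)+1)) - 1/(12*((m:ℝ)+1)+12) := by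
  have hs := Stirling.log_stirlingSeq_diff_hasSum m
  set x : ℝ := (1 / (2 * (↑(m+1):ℝ) + 1)) ^ 2 with hxdef
  have hm0 : (0:ℝ) ≤ (m:ℝ) := Nat.cast_nonneg m
  have hx0 : 0 < x := by positivity
  have hx1 : x < 1 := by
    rw [hxdef, div_pow, one_pow, div_lt_one (by positivity)]
    push_cast; nlinarith
  have hg : HasSum (fun k : ℕ => (1:ℝ)/3 * x ^ (k+1)) ((1/3) * (x / (1 - x))) := by
    have h := (hasSum_geometric_of_lt_one hx0.le hx1).mul_left ((1/3) * x)
    have e1 : (fun k : ℕ => (1:ℝ)/3 * x ^ (k+1)) = fun i => 1/3*x*x^i := by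
      funext k; rw [_root_.pow_succ']; ring
    have e2 : (1/3:ℝ) * (x / (1 - x)) = 1/3*x*(1-x)⁻¹ := by ring
    rw [e1, e2]; exact h
  have hlt : Real.log (stirlingSeq (m+1)) - Real.log (stirlingSeq (m+2)) <
      (1/3) * (x / (1 - x)) := by
    refine hasSum_lt (i := 1) ?_ ?_ hs hg
    · intro k
      have h3 : (3:ℝ) ≤ 2*(↑(k+1):ℝ)+1 := by push_cast; linarith [Nat.cast_nonneg (α := ℝ) k]
      have hp : (0:ℝ) ≤ x ^ (k+1) := by positivity
      apply mul_le_mul_of_nonneg_right _ hp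
      rw [div_le_div_iff₀ (by linarith) (by norm_num)]
      linarith
    · have hp : (0:ℝ) < x ^ (1+1) := by positivity
      push_cast
      nlinarith
  calc Real.log (stirlingSeq (m+1)) - Real.log (stirlingSeq (m+2))
      < (1/3) * (x / (1 - x)) := hlt
    _ = 1/(12*((m:ℝ)+1)) - 1/(12*((m:ℝ)+1)+12) := by
        rw [hxdef]; push_cast
        exact geo_eval ((m:ℝ)+1) (by linarith)


lemma poly_lower (n : ℝ) (hn : 1 ≤ n) :
    1/(12*n+1) - 1/(12*n+13) <
      1/3 * (1/(2*n+1))^2 + 1/5 * ((1/(2*n+1))^2)^2 := by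
  have h1 : (0:ℝ) < 12*n+1 := by linarith
  have h2 : (0:ℝ) < 12*n+13 := by linarith
  have h3 : (0:ℝ) < 2*n+1 := by linarith
  have e : 1/3 * (1/(2*n+1))^2 + 1/5 * ((1/(2*n+1))^2)^2
      = (5*(2*n+1)^2+3)/(15*(2*n+1)^4) := by
    field_simp
    ring
  have e2 : 1/(12*n+1) - 1/(12*n+13) = 12/((12*n+1)*(12*n+13)) := by
    field_simp
    ring
  rw [e, e2, div_lt_div_iff₀ (by positivity) (by positivity)]
  nlinarith [sq_nonneg n, sq_nonneg (n-1), mul_pos h3 h3]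

lemma diff_gt_lower (m : ℕ) :
    1/(12*((m:ℝ)+1)+1) - 1/(12*((m:ℝ)+1)+13) <
      Real.log (stirlingSeq (m+1)) - Real.log (stirlingSeq (m+2)) := by
  have hs := Stirling.log_stirlingSeq_diff_hasSum m
  have hle := sum_le_hasSum ({0,1} : Finset ℕ) (fun i _ => by positivity) hs
  norm_num at hle
  refine lt_of_lt_of_le ?_ hle
  have hp := poly_lower ((m:ℝ)+1) (by linarith [Nat.cast_nonneg (α := ℝ) m])
  have e : (1:ℝ)/3 * (1/(2*((m:ℝ)+1)+1))^2 + 1/5 * ((1/(2*((m:ℝ)+1)+1))^2)^2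
      = 1/3 * (((2*((m:ℝ)+1)+1))^2)⁻¹ + 1/5 * ((((2*((m:ℝ)+1)+1))^2)^2)⁻¹ := by
    simp [one_div, inv_pow]
  exact hp.trans_eq e


lemma tendsto_log_stirling :
    Tendsto (fun j : ℕ => Real.log (stirlingSeq (j+1))) atTop (𝓝 (Real.log (√π))) := by
  have h1 : Tendsto (fun j : ℕ => stirlingSeq (j+1)) atTop (𝓝 (√π)) :=
    Stirling.tendsto_stirlingSeq_sqrt_pi.comp (tendsto_add_atTop_nat 1)
  exact (Real.continuousAt_log (Real.sqrt_pos.2 Real.pi_pos).ne').tendsto.comp h1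

lemma tendsto_aux (a : ℝ) (ha : 0 < a) (b : ℝ) :
    Tendsto (fun j : ℕ => 1/(a*((j:ℝ)+1)+b)) atTop (𝓝 0) := by
  have h0 : Tendsto (fun j : ℕ => a*((j:ℝ)+1)+b) atTop atTop := by
    apply tendsto_atTop_add_const_right
    apply Tendsto.const_mul_atTop ha
    exact tendsto_atTop_add_const_right _ _ tendsto_natCast_atTop_atTop
  simpa [one_div, Function.comp_def] using tendsto_inv_atTop_zero.comp h0

lemma robbins_log (m : ℕ) :
    1/(12*((m:ℝ)+1)+1) < Real.log (stirlingSeq (m+1)) - Real.log (√π) ∧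
    Real.log (stirlingSeq (m+1)) - Real.log (√π) < 1/(12*((m:ℝ)+1)) := by
  set L : ℕ → ℝ := fun j => Real.log (stirlingSeq (j+1)) with hL
  -- c : strictly decreasing to log √π
  set c : ℕ → ℝ := fun j => L j - 1/(12*((j:ℝ)+1)+1) with hc
  have hc_succ : ∀ j, c (j+1) < c j := by
    intro j
    have h := diff_gt_lower j
    simp only [hc, hL]
    push_cast
    push_cast at h
    ring_nf
    ring_nf at h
    linarith
  have hc_anti : Antitone c := antitone_nat_of_succ_le fun j => (hc_succ j).le
  have hc_tend : Tendsto c atTop (𝓝 (Real.log (√π))) := by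
    have h := tendsto_log_stirling.sub (tendsto_aux 12 (by norm_num) 1)
    rw [sub_zero] at h
    exact h
  have hc_ge : ∀ j, Real.log (√π) ≤ c j := fun j =>
    le_of_tendsto hc_tend (eventually_atTop.2 ⟨j, fun k hk => hc_anti hk⟩)
  -- b : strictly increasing to log √π
  set b : ℕ → ℝ := fun j => L j - 1/(12*((j:ℝ)+1)) with hb
  have hb_succ : ∀ j, b j < b (j+1) := by
    intro j
    have h := diff_lt_upper j
    simp only [hb, hL]
    push_cast
    push_cast at h
    ring_nf
    ring_nf at h
    linarith
  have hb_mono : Monotone b := monotone_nat_of_le_succ fun j => (hb_succ j).le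
  have hb_tend : Tendsto b atTop (𝓝 (Real.log (√π))) := by
    have h := tendsto_log_stirling.sub (tendsto_aux 12 (by norm_num) 0)
    rw [sub_zero] at h
    simp only [add_zero] at h
    exact h
  have hb_le : ∀ j, b j ≤ Real.log (√π) := fun j =>
    ge_of_tendsto hb_tend (eventually_atTop.2 ⟨j, fun k hk => hb_mono hk⟩)
  constructor
  · have := (hc_ge (m+1)).trans_lt (hc_succ m)
    simp only [hc, hL] at this
    linarith
  · have := (hb_succ m).trans_le (hb_le (m+1))
    simp only [hb, hL] at this
    linarith


lemma robbins_mul (m : ℕ) (hm : 1 ≤ m) :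
    √(2*π*(m:ℝ)) * ((m:ℝ)/Real.exp 1)^m * Real.exp (1/(12*(m:ℝ)+1)) < (m ! : ℝ) ∧
    (m ! : ℝ) < √(2*π*(m:ℝ)) * ((m:ℝ)/Real.exp 1)^m * Real.exp (1/(12*(m:ℝ))) := by
  obtain ⟨j, rfl⟩ : ∃ j, m = j + 1 := ⟨m-1, (Nat.succ_pred_eq_of_pos hm).symm⟩
  have hR := robbins_log j
  have hS_pos : 0 < stirlingSeq (j+1) := Stirling.stirlingSeq'_pos j
  have hjp : (0:ℝ) < (↑(j+1):ℝ) := by positivity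
  have hd : (0:ℝ) < √(2*(↑(j+1):ℝ)) * ((↑(j+1):ℝ)/Real.exp 1)^(j+1) := by positivity
  have hfac : ((j+1)! : ℝ)
      = stirlingSeq (j+1) * (√(2*(↑(j+1):ℝ)) * ((↑(j+1):ℝ)/Real.exp 1)^(j+1)) := by
    rw [stirlingSeq, div_mul_cancel₀ _ hd.ne']
  have hsq : √(2*π*(↑(j+1):ℝ)) = √π * √(2*(↑(j+1):ℝ)) := by
    rw [show (2*π*(↑(j+1):ℝ)) = π*(2*(↑(j+1):ℝ)) by ring, Real.sqrt_mul Real.pi_pos.le]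
  have hsp : (0:ℝ) < √π := Real.sqrt_pos.2 Real.pi_pos
  have h1 : Real.exp (1/(12*((j:ℝ)+1)+1)) < stirlingSeq (j+1) / √π := by
    have h := Real.exp_lt_exp.2 hR.1
    rwa [Real.exp_sub, Real.exp_log hS_pos, Real.exp_log hsp] at h
  have h2 : stirlingSeq (j+1) / √π < Real.exp (1/(12*((j:ℝ)+1))) := by
    have h := Real.exp_lt_exp.2 hR.2
    rwa [Real.exp_sub, Real.exp_log hS_pos, Real.exp_log hsp] at h
  rw [div_lt_iff₀ hsp] at h2
  rw [lt_div_iff₀ hsp] at h1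
  constructor
  · rw [hfac, hsq]
    push_cast
    calc √π * √(2*((j:ℝ)+1)) * (((j:ℝ)+1)/Real.exp 1)^(j+1) * Real.exp (1/(12*((j:ℝ)+1)+1))
        = (Real.exp (1/(12*((j:ℝ)+1)+1)) * √π) * (√(2*((j:ℝ)+1)) * (((j:ℝ)+1)/Real.exp 1)^(j+1)) := by ring
      _ < stirlingSeq (j+1) * (√(2*((j:ℝ)+1)) * (((j:ℝ)+1)/Real.exp 1)^(j+1)) := by
          apply mul_lt_mul_of_pos_right h1
          push_cast at hd
          exact hd
  · rw [hfac, hsq]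
    push_cast
    calc stirlingSeq (j+1) * (√(2*((j:ℝ)+1)) * (((j:ℝ)+1)/Real.exp 1)^(j+1))
        < (Real.exp (1/(12*((j:ℝ)+1))) * √π) * (√(2*((j:ℝ)+1)) * (((j:ℝ)+1)/Real.exp 1)^(j+1)) := by
          apply mul_lt_mul_of_pos_right h2
          push_cast at hd
          exact hd
      _ = √π * √(2*((j:ℝ)+1)) * (((j:ℝ)+1)/Real.exp 1)^(j+1) * Real.exp (1/(12*((j:ℝ)+1))) := by ring


lemma key_identity (n k : ℕ) (hk : 1 ≤ k) (hkn : k < n) :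
    (√(2*π*(n:ℝ)) * ((n:ℝ)/Real.exp 1)^n) * ((k:ℝ)/(n:ℝ))^k * (((n:ℝ)-(k:ℝ))/(n:ℝ))^(n-k)
      = (√(2*π*(k:ℝ)) * ((k:ℝ)/Real.exp 1)^k)
        * (√(2*π*((n:ℝ)-(k:ℝ))) * (((n:ℝ)-(k:ℝ))/Real.exp 1)^(n-k))
        / √(2*π*(k:ℝ)*(((n:ℝ)-(k:ℝ))/(n:ℝ))) := by
  have hk0 : (0:ℝ) < (k:ℝ) := by exact_mod_cast hk
  have hn0 : (0:ℝ) < (n:ℝ) := by exact_mod_cast (hk.trans hkn.le : 1 ≤ n)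
  have hc0 : (0:ℝ) < (n:ℝ)-(k:ℝ) := by
    have : (k:ℝ) < (n:ℝ) := by exact_mod_cast hkn
    linarith
  -- split the power of n
  have hpow : ((n:ℝ)/Real.exp 1)^n = ((n:ℝ)/Real.exp 1)^k * ((n:ℝ)/Real.exp 1)^(n-k) := by
    rw [← pow_add, Nat.add_sub_cancel' hkn.le]
  have e1 : ((n:ℝ)/Real.exp 1)^k * ((k:ℝ)/(n:ℝ))^k = ((k:ℝ)/Real.exp 1)^k := by
    rw [← mul_pow]; congr 1; field_simp
  have e2 : ((n:ℝ)/Real.exp 1)^(n-k) * (((n:ℝ)-(k:ℝ))/(n:ℝ))^(n-k)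
      = (((n:ℝ)-(k:ℝ))/Real.exp 1)^(n-k) := by
    rw [← mul_pow]; congr 1; field_simp
  -- sqrt identity
  have hq0 : (0:ℝ) < 2*π*(k:ℝ)*(((n:ℝ)-(k:ℝ))/(n:ℝ)) := by positivity
  have hs : √(2*π*(n:ℝ)) * √(2*π*(k:ℝ)*(((n:ℝ)-(k:ℝ))/(n:ℝ)))
      = √(2*π*(k:ℝ)) * √(2*π*((n:ℝ)-(k:ℝ))) := by
    rw [← Real.sqrt_mul (by positivity), ← Real.sqrt_mul (by positivity)]
    congr 1
    field_simp
  rw [eq_div_iff (Real.sqrt_pos.2 hq0).ne']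
  calc (√(2*π*(n:ℝ)) * ((n:ℝ)/Real.exp 1)^n) * ((k:ℝ)/(n:ℝ))^k * (((n:ℝ)-(k:ℝ))/(n:ℝ))^(n-k)
        * √(2*π*(k:ℝ)*(((n:ℝ)-(k:ℝ))/(n:ℝ)))
      = (√(2*π*(n:ℝ)) * √(2*π*(k:ℝ)*(((n:ℝ)-(k:ℝ))/(n:ℝ))))
        * (((n:ℝ)/Real.exp 1)^k * ((k:ℝ)/(n:ℝ))^k)
        * (((n:ℝ)/Real.exp 1)^(n-k) * (((n:ℝ)-(k:ℝ))/(n:ℝ))^(n-k)) := by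
        rw [hpow]; ring
    _ = (√(2*π*(k:ℝ)) * ((k:ℝ)/Real.exp 1)^k)
        * (√(2*π*((n:ℝ)-(k:ℝ))) * (((n:ℝ)-(k:ℝ))/Real.exp 1)^(n-k)) := by
        rw [hs, e1, e2]; ring

end RobbinsAux


/-- The probability that a binomial random variable with parameters `n`, `p`
takes the value `j`. -/
noncomputable def binomPMF (n : ℕ) (p : ℝ) (j : ℕ) : ℝ :=
  (n.choose j : ℝ) * p ^ j * (1 - p) ^ (n - j)

/-- Tight (Robbins–Stirling) bounds on `P(Bin(n, k/n) = k)`: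
`exp(t₀)/√(2πk(1−p)) < P(Bin(n,p) = k) < exp(t₁)/√(2πk(1−p))`, where
`t₀ = 1/(12n+1) − (1/(12k) + 1/(12(n−k)))` and
`t₁ = 1/(12n) − (1/(12k+1) + 1/(12(n−k)+1))`. -/
theorem binom_mode_robbins_bounds (n k : ℕ) (hk : 1 ≤ k) (hkn : k < n)
    (p t₀ t₁ : ℝ) (hp : p = (k : ℝ) / (n : ℝ))
    (ht₀ : t₀ = 1 / (12 * (n : ℝ) + 1)
      - (1 / (12 * (k : ℝ)) + 1 / (12 * ((n : ℝ) - (k : ℝ)))))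
    (ht₁ : t₁ = 1 / (12 * (n : ℝ))
      - (1 / (12 * (k : ℝ) + 1) + 1 / (12 * ((n : ℝ) - (k : ℝ)) + 1))) :
    Real.exp t₀ / Real.sqrt (2 * Real.pi * (k : ℝ) * (1 - p)) < binomPMF n p k ∧
    binomPMF n p k < Real.exp t₁ / Real.sqrt (2 * Real.pi * (k : ℝ) * (1 - p)) := by
  have hk0 : (0:ℝ) < (k:ℝ) := by exact_mod_cast hk
  have hn0 : (0:ℝ) < (n:ℝ) := by exact_mod_cast (hk.trans hkn.le : 1 ≤ n)
  have hknR : (k:ℝ) < (n:ℝ) := by exact_mod_cast hkn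
  have hc0 : (0:ℝ) < (n:ℝ)-(k:ℝ) := by linarith
  have hcast : ((n-k:ℕ):ℝ) = (n:ℝ)-(k:ℝ) := by
    rw [Nat.cast_sub hkn.le]
  have hq : 1 - p = ((n:ℝ)-(k:ℝ))/(n:ℝ) := by rw [hp]; field_simp
  have hp0 : 0 < p := by rw [hp]; positivity
  have hq0 : 0 < 1 - p := by rw [hq]; positivity
  have hpq0 : 0 < p^k * (1-p)^(n-k) := by positivity
  -- Robbins bounds for n, k, n-k
  obtain ⟨hnl, hnu⟩ := robbins_mul n (hk.trans hkn.le)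
  obtain ⟨hkl, hku⟩ := robbins_mul k hk
  obtain ⟨hcl, hcu⟩ := robbins_mul (n-k) (by omega)
  rw [hcast] at hcl hcu
  have hKI0 : (√(2*π*(n:ℝ)) * ((n:ℝ)/Real.exp 1)^n) * p^k * (1-p)^(n-k)
      = (√(2*π*(k:ℝ)) * ((k:ℝ)/Real.exp 1)^k)
        * (√(2*π*((n:ℝ)-(k:ℝ))) * (((n:ℝ)-(k:ℝ))/Real.exp 1)^(n-k))
        / √(2*π*(k:ℝ)*(1-p)) := by
    rw [hq, hp]
    exact key_identity n k hk hkn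
  set A : ℝ := √(2*π*(n:ℝ)) * ((n:ℝ)/Real.exp 1)^n with hA
  set B : ℝ := √(2*π*(k:ℝ)) * ((k:ℝ)/Real.exp 1)^k with hB
  set C : ℝ := √(2*π*((n:ℝ)-(k:ℝ))) * (((n:ℝ)-(k:ℝ))/Real.exp 1)^(n-k) with hC
  set Q : ℝ := √(2*π*(k:ℝ)*(1-p)) with hQ
  have hA0 : 0 < A := by rw [hA]; positivity
  have hB0 : 0 < B := by rw [hB]; positivity
  have hC0 : 0 < C := by rw [hC]; positivity
  have hQ0 : 0 < Q := by rw [hQ]; positivity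
  have hKI : A * p^k * (1-p)^(n-k) = B * C / Q := hKI0
  have hPeq : binomPMF n p k = (Nat.factorial n : ℝ)/((Nat.factorial k : ℝ)*(Nat.factorial (n-k) : ℝ)) * (p^k * (1-p)^(n-k)) := by
    rw [binomPMF, Nat.cast_choose ℝ hkn.le]
    push_cast
    ring
  have hfk0 : (0:ℝ) < (Nat.factorial k : ℝ) := by exact_mod_cast k.factorial_pos
  have hfc0 : (0:ℝ) < (Nat.factorial (n-k) : ℝ) := by exact_mod_cast (n-k).factorial_pos
  have hfn0 : (0:ℝ) < (Nat.factorial n : ℝ) := by exact_mod_cast n.factorial_pos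
  constructor
  · -- lower bound
    have e_lower : Real.exp t₀ / Q
        = (A * Real.exp (1/(12*(n:ℝ)+1)))
          / ((B * Real.exp (1/(12*(k:ℝ)))) * (C * Real.exp (1/(12*((n:ℝ)-(k:ℝ))))))
          * (p^k * (1-p)^(n-k)) := by
      rw [ht₀, Real.exp_sub, Real.exp_add]
      have expand : (A * Real.exp (1/(12*(n:ℝ)+1)))
          / ((B * Real.exp (1/(12*(k:ℝ)))) * (C * Real.exp (1/(12*((n:ℝ)-(k:ℝ))))))
          * (p^k * (1-p)^(n-k))
          = (A * p^k * (1-p)^(n-k)) / (B*C)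
            * (Real.exp (1/(12*(n:ℝ)+1))
                / (Real.exp (1/(12*(k:ℝ))) * Real.exp (1/(12*((n:ℝ)-(k:ℝ)))))) := by
        field_simp
      rw [expand, hKI]
      field_simp
    rw [hPeq, e_lower]
    apply mul_lt_mul_of_pos_right _ hpq0
    apply div_lt_div₀ hnl _ hfn0.le (by positivity)
    exact (mul_lt_mul'' hku hcu (by positivity) (by positivity)).le
  · -- upper bound
    have e_upper : Real.exp t₁ / Q
        = (A * Real.exp (1/(12*(n:ℝ))))
          / ((B * Real.exp (1/(12*(k:ℝ)+1))) * (C * Real.exp (1/(12*((n:ℝ)-(k:ℝ))+1))))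
          * (p^k * (1-p)^(n-k)) := by
      rw [ht₁, Real.exp_sub, Real.exp_add]
      have expand : (A * Real.exp (1/(12*(n:ℝ))))
          / ((B * Real.exp (1/(12*(k:ℝ)+1))) * (C * Real.exp (1/(12*((n:ℝ)-(k:ℝ))+1))))
          * (p^k * (1-p)^(n-k))
          = (A * p^k * (1-p)^(n-k)) / (B*C)
            * (Real.exp (1/(12*(n:ℝ)))
                / (Real.exp (1/(12*(k:ℝ)+1)) * Real.exp (1/(12*((n:ℝ)-(k:ℝ))+1)))) := by
        field_simp
      rw [expand, hKI]
      field_simp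
    rw [hPeq, e_upper]
    apply mul_lt_mul_of_pos_right _ hpq0
    apply div_lt_div₀ hnu _ (by positivity) (by positivity)
    exact (mul_lt_mul'' hkl hcl (by positivity) (by positivity)).le
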